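/- Let Σ and C be abelian groups. Assume Σ is the union of an increasing sequence of subgroups Σ₁ ≤ Σ₂ ≤ ⋯ with Σ₁ = {0} such that for every n, the quotient Σₙ₊₁/Σₙ is either isomorphic to ℤ, or isomorphic to ℤ/Nₙℤ for some integer Nₙ ≥ 1 such that C is p-divisible for every prime divisor p of Nₙ. Then every normalized 2-cocycle Ω : Σ × Σ → C that is symmetric, i.e., Ω(a,b) = Ω(b,a) for all a,b ∈ Σ, is a coboundary. -/

import Mathlib

/-- A normalized 2-cocycle on an (additive) abelian group `A` with values in `C`. -/
def IsAddCocycle {A C : Type*} [AddCommGroup A] [AddCommGroup C] (Ω : A → A → C) : Prop :=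
  (∀ a b c, Ω a b + Ω (a + b) c = Ω a (b + c) + Ω b c) ∧
  (∀ a, Ω a 0 = 0) ∧ (∀ a, Ω 0 a = 0)

/-- A 2-coboundary on an (additive) abelian group `A` with values in `C`. -/
def IsAddCoboundary {A C : Type*} [AddCommGroup A] [AddCommGroup C] (Ω : A → A → C) : Prop :=
  ∃ F : A → C, F 0 = 0 ∧ ∀ a b, Ω a b = F a + F b - F (a + b)

/-- If `C` is `p`-divisible for every prime `p ∣ N` (with `N ≥ 1`), then `C` is `N`-divisible. -/
lemma TwAux.nsmul_surj_of_prime {C : Type*} [AddCommGroup C] :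
    ∀ N : ℕ, 1 ≤ N → (∀ p : ℕ, p.Prime → p ∣ N → ∀ c : C, ∃ d : C, p • d = c) →
      ∀ c : C, ∃ d : C, N • d = c := by
  intro N
  induction N using Nat.strong_induction_on with
  | _ N ih =>
    intro hN hp c
    rcases eq_or_lt_of_le hN with h1 | h2
    · exact ⟨c, by rw [← h1, one_smul]⟩
    · have hpp : N.minFac.Prime := Nat.minFac_prime (by omega)
      obtain ⟨M, hM⟩ := N.minFac_dvd
      have hM1 : 1 ≤ M := by
        rcases Nat.eq_zero_or_pos M with h | h
        · simp [h] at hM; omega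
        · exact h
      have hMlt : M < N := by
        calc M = 1 * M := (one_mul M).symm
        _ < N.minFac * M := by
            exact mul_lt_mul_of_pos_right hpp.one_lt (show 0 < M by omega)
        _ = N := hM.symm
      obtain ⟨d₁, hd₁⟩ := ih M hMlt hM1
        (fun q hq hqd => hp q hq (hqd.trans (Dvd.intro_left _ hM.symm))) c
      obtain ⟨d₂, hd₂⟩ := hp N.minFac hpp N.minFac_dvd d₁
      exact ⟨d₂, by rw [hM, mul_comm, mul_smul, hd₂, hd₁]⟩

/-- A section over a subgroup can be extended along a cyclic extension of subgroups. -/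
lemma TwAux.section_extend {Sg E : Type*} [AddCommGroup Sg] [AddCommGroup E]
    (π : E →+ Sg) (hsurj : Function.Surjective π)
    (B A' : AddSubgroup Sg) (hBA : B ≤ A') (N : ℕ)
    (φ : (↥A' ⧸ B.addSubgroupOf A') ≃+ ZMod N)
    (hdiv : N = 0 ∨ ∀ c : E, π c = 0 → ∃ d : E, π d = 0 ∧ N • d = c)
    (s : ↥B →+ E) (hs : ∀ b, π (s b) = (b : Sg)) :
    ∃ s' : ↥A' →+ E, (∀ a, π (s' a) = (a : Sg)) ∧
      ∀ b (hb : b ∈ B), s' ⟨b, hBA hb⟩ = s ⟨b, hb⟩ := by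
  classical
  set Q := ↥A' ⧸ B.addSubgroupOf A' with hQ
  let mk : ↥A' →+ Q := QuotientAddGroup.mk' (B.addSubgroupOf A')
  obtain ⟨t', ht'⟩ := QuotientAddGroup.mk'_surjective (B.addSubgroupOf A') (φ.symm 1)
  set k : ↥A' → ℤ := fun a => (ZMod.cast (φ (mk a)) : ℤ) with hkdef
  have hk : ∀ a, ((k a : ℤ) : ZMod N) = φ (mk a) := fun a => ZMod.intCast_zmod_cast _
  have hmemt : ∀ j : ℤ, ((j : ZMod N) = 0) → j • (t' : Sg) ∈ B := by
    intro j hj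
    have : mk (j • t') = 0 := by
      rw [map_zsmul, ht']
      have : j • φ.symm 1 = φ.symm ((j : ZMod N)) := by
        rw [← map_zsmul]
        congr 1
        rw [zsmul_eq_mul, mul_one]
      rw [this, hj, map_zero]
    have h2 : (j • t' : ↥A') ∈ B.addSubgroupOf A' := by
      rwa [← QuotientAddGroup.eq_zero_iff (j • t')]
    rw [AddSubgroup.mem_addSubgroupOf] at h2
    simpa using h2
  have hmemβ : ∀ a : ↥A', (a : Sg) - k a • (t' : Sg) ∈ B := by
    intro a
    have : mk (a - k a • t') = 0 := by
      rw [map_sub, map_zsmul, ht']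
      have h1 : k a • φ.symm 1 = φ.symm ((k a : ZMod N)) := by
        rw [← map_zsmul]; congr 1; rw [zsmul_eq_mul, mul_one]
      rw [h1, hk]
      simp
    have h2 : (a - k a • t' : ↥A') ∈ B.addSubgroupOf A' := by
      rwa [← QuotientAddGroup.eq_zero_iff (a - k a • t')]
    rw [AddSubgroup.mem_addSubgroupOf] at h2
    simpa using h2
  set β : ↥A' → ↥B := fun a => ⟨(a : Sg) - k a • (t' : Sg), hmemβ a⟩ with hβdef
  have hcoeβ : ∀ a, (β a : Sg) = (a : Sg) - k a • (t' : Sg) := fun a => rfl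
  have hdvd : ∀ a b : ↥A', (N : ℤ) ∣ (k a + k b - k (a + b)) := by
    intro a b
    have : ((k a + k b - k (a + b) : ℤ) : ZMod N) = 0 := by
      push_cast
      rw [hk, hk, hk, map_add, map_add]
      abel
    exact (CharP.intCast_eq_zero_iff (ZMod N) N _).mp this
  have hNmem : ((N : ℤ)) • (t' : Sg) ∈ B := by
    apply hmemt
    push_cast
    simp
  set wB : ↥B := ⟨(N : ℤ) • (t' : Sg), hNmem⟩ with hwB
  obtain ⟨e₀, he₀⟩ := hsurj (t' : Sg)
  obtain ⟨e, he1, he2⟩ : ∃ e : E, π e = (t' : Sg) ∧ (N : ℤ) • e = s wB := by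
    rcases hdiv with h0 | hdiv
    · refine ⟨e₀, he₀, ?_⟩
      have hw0 : wB = 0 := by
        apply Subtype.ext
        simp [hwB, h0]
      rw [hw0, map_zero, h0]
      simp
    · have hc : π ((N : ℤ) • e₀ - s wB) = 0 := by
        rw [map_sub, map_zsmul, he₀, hs]
        simp [hwB]
      obtain ⟨d, hd0, hdN⟩ := hdiv _ hc
      refine ⟨e₀ - d, by rw [map_sub, hd0, he₀, sub_zero], ?_⟩
      have hdz : (N : ℤ) • d = N • d := natCast_zsmul d N
      rw [zsmul_sub, hdz, hdN]
      abel
  have hβadd : ∀ a b : ↥A',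
      s (β a) + s (β b) + (k a + k b - k (a + b)) • e = s (β (a + b)) := by
    intro a b
    obtain ⟨q, hq⟩ := hdvd a b
    have hγmem : (k a + k b - k (a + b)) • (t' : Sg) ∈ B := by
      apply hmemt
      rw [hq]
      push_cast
      simp
    have hsum : β a + β b + ⟨_, hγmem⟩ = β (a + b) := by
      apply Subtype.ext
      push_cast [hcoeβ]
      rw [sub_zsmul, add_zsmul]
      abel
    have hγ : s ⟨_, hγmem⟩ = (k a + k b - k (a + b)) • e := by
      have hval : (⟨(k a + k b - k (a + b)) • (t' : Sg), hγmem⟩ : ↥B) = q • wB := by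
        apply Subtype.ext
        push_cast [hwB]
        rw [hq, mul_comm, mul_smul]
      rw [hval, map_zsmul, ← he2, ← mul_zsmul, mul_comm q (N : ℤ), ← hq]
    rw [← hγ, ← map_add, ← map_add, hsum]
  refine ⟨AddMonoidHom.mk' (fun a => s (β a) + k a • e) ?_, ?_, ?_⟩
  · intro a b
    calc s (β (a + b)) + k (a + b) • e
        = (s (β a) + s (β b) + (k a + k b - k (a + b)) • e) + k (a + b) • e := by
          rw [hβadd]
      _ = s (β a) + s (β b) + ((k a + k b - k (a + b)) + k (a + b)) • e := by
          rw [add_zsmul]; abel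
      _ = s (β a) + s (β b) + (k a + k b) • e := by
          congr 2
          ring
      _ = (s (β a) + k a • e) + (s (β b) + k b • e) := by
          rw [add_zsmul]; abel
  · intro a
    show π (s (β a) + k a • e) = (a : Sg)
    rw [map_add, map_zsmul, hs, he1, hcoeβ]
    abel
  · intro b hb
    have hm : mk ⟨b, hBA hb⟩ = 0 := by
      apply (QuotientAddGroup.eq_zero_iff _).mpr
      rwa [AddSubgroup.mem_addSubgroupOf]
    have hk0 : k ⟨b, hBA hb⟩ = 0 := by
      simp [hkdef, hm]
    show s (β ⟨b, hBA hb⟩) + k ⟨b, hBA hb⟩ • e = s ⟨b, hb⟩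
    rw [hk0, zero_zsmul, add_zero]
    congr 1
    apply Subtype.ext
    rw [hcoeβ, hk0]
    simp

/-- Sections along a filtration glue to a global section. -/
lemma TwAux.section_glue {Sg E : Type*} [AddCommGroup Sg] [AddCommGroup E]
    (π : E →+ Sg) (S : ℕ → AddSubgroup Sg) (hmono : Monotone S)
    (hunion : ∀ x : Sg, ∃ n, x ∈ S n)
    (hbase : ∃ s₀ : ↥(S 0) →+ E, ∀ a, π (s₀ a) = (a : Sg))
    (hstep : ∀ n (s : ↥(S n) →+ E), (∀ a, π (s a) = (a : Sg)) →
      ∃ s' : ↥(S (n+1)) →+ E, (∀ a, π (s' a) = (a : Sg)) ∧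
        ∀ b (hb : b ∈ S n), s' ⟨b, hmono n.le_succ hb⟩ = s ⟨b, hb⟩) :
    ∃ σ : Sg → E, σ 0 = 0 ∧ (∀ x, π (σ x) = x) ∧ ∀ a b, σ (a + b) = σ a + σ b := by
  classical
  let T : ℕ → Type _ := fun n => {s : ↥(S n) →+ E // ∀ a, π (s a) = (a : Sg)}
  let step : ∀ n, T n → T (n+1) := fun n p =>
    ⟨(hstep n p.1 p.2).choose, (hstep n p.1 p.2).choose_spec.1⟩
  let f : ∀ n, T n := fun n => Nat.rec ⟨hbase.choose, hbase.choose_spec⟩ step n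
  have hf0 : ∀ n b (hb : b ∈ S n), (f (n+1)).1 ⟨b, hmono n.le_succ hb⟩ = (f n).1 ⟨b, hb⟩ :=
    fun n b hb => (hstep n (f n).1 (f n).2).choose_spec.2 b hb
  have hfmn : ∀ n m (h : n ≤ m) b (hb : b ∈ S n), (f m).1 ⟨b, hmono h hb⟩ = (f n).1 ⟨b, hb⟩ := by
    intro n m h
    induction m, h using Nat.le_induction with
    | base => intro b hb; rfl
    | succ m hm ih =>
      intro b hb
      have h1 := hf0 m b (hmono hm hb)
      exact h1.trans (ih b hb)
  let nn : Sg → ℕ := fun x => (hunion x).choose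
  have hnn : ∀ x, x ∈ S (nn x) := fun x => (hunion x).choose_spec
  let σ : Sg → E := fun x => (f (nn x)).1 ⟨x, hnn x⟩
  have key : ∀ x n (hx : x ∈ S n), σ x = (f n).1 ⟨x, hx⟩ := by
    intro x n hx
    have h1 := hfmn (nn x) (max (nn x) n) (le_max_left _ _) x (hnn x)
    have h2 := hfmn n (max (nn x) n) (le_max_right _ _) x hx
    exact h1.symm.trans h2
  refine ⟨σ, ?_, ?_, ?_⟩
  · have h := key 0 (nn 0) (hnn 0)
    rw [h]
    have : (⟨0, hnn 0⟩ : ↥(S (nn 0))) = 0 := rfl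
    rw [this, map_zero]
  · intro x
    exact (f (nn x)).2 ⟨x, hnn x⟩
  · intro a b
    have ha : a ∈ S (max (nn a) (nn b)) := hmono (le_max_left _ _) (hnn a)
    have hb : b ∈ S (max (nn a) (nn b)) := hmono (le_max_right _ _) (hnn b)
    have hab : a + b ∈ S (max (nn a) (nn b)) := add_mem ha hb
    rw [key a _ ha, key b _ hb, key (a + b) _ hab, ← map_add]
    rfl

/-- The extension of `C` by `Sg` twisted by a 2-cochain `Ω`. -/
@[ext] structure TwExt (C Sg : Type*) (Ω : Sg → Sg → C) where
  c1 : C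
  x1 : Sg

section Tw
variable {Sg C : Type*} [AddCommGroup Sg] [AddCommGroup C] {Ω : Sg → Sg → C}

def twAdd (Ω : Sg → Sg → C) (u v : TwExt C Sg Ω) : TwExt C Sg Ω :=
  ⟨u.c1 + v.c1 + Ω u.x1 v.x1, u.x1 + v.x1⟩

def twNeg (Ω : Sg → Sg → C) (u : TwExt C Sg Ω) : TwExt C Sg Ω :=
  ⟨-u.c1 - Ω u.x1 (-u.x1), -u.x1⟩

instance : Add (TwExt C Sg Ω) := ⟨twAdd Ω⟩
instance : Zero (TwExt C Sg Ω) := ⟨⟨0,0⟩⟩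
instance : Neg (TwExt C Sg Ω) := ⟨twNeg Ω⟩

lemma twAdd_def (u v : TwExt C Sg Ω) : u + v = twAdd Ω u v := rfl
lemma twZero_def : (0 : TwExt C Sg Ω) = ⟨0,0⟩ := rfl

/-- If `Ω` is a symmetric normalized 2-cocycle, the twisted extension is an abelian group. -/
def twGroup (hΩ : IsAddCocycle Ω) (hsym : ∀ a b, Ω a b = Ω b a) :
    AddCommGroup (TwExt C Sg Ω) where
  add := (· + ·)
  zero := 0
  neg := (-·)
  nsmul := nsmulRec
  zsmul := zsmulRec
  add_assoc u v w := by
    obtain ⟨h1, h2, h3⟩ := hΩ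
    show twAdd Ω (twAdd Ω u v) w = twAdd Ω u (twAdd Ω v w)
    unfold twAdd
    ext
    · show u.c1 + v.c1 + Ω u.x1 v.x1 + w.c1 + Ω (u.x1 + v.x1) w.x1
        = u.c1 + (v.c1 + w.c1 + Ω v.x1 w.x1) + Ω u.x1 (v.x1 + w.x1)
      have h := h1 u.x1 v.x1 w.x1
      calc u.c1 + v.c1 + Ω u.x1 v.x1 + w.c1 + Ω (u.x1 + v.x1) w.x1
          = u.c1 + v.c1 + w.c1 + (Ω u.x1 v.x1 + Ω (u.x1 + v.x1) w.x1) := by abel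
        _ = u.c1 + v.c1 + w.c1 + (Ω u.x1 (v.x1 + w.x1) + Ω v.x1 w.x1) := by rw [h]
        _ = u.c1 + (v.c1 + w.c1 + Ω v.x1 w.x1) + Ω u.x1 (v.x1 + w.x1) := by abel
    · exact add_assoc u.x1 v.x1 w.x1
  zero_add u := by
    show twAdd Ω ⟨0,0⟩ u = u
    unfold twAdd
    ext
    · show 0 + u.c1 + Ω 0 u.x1 = u.c1; rw [hΩ.2.2]; abel
    · exact zero_add u.x1
  add_zero u := by
    show twAdd Ω u ⟨0,0⟩ = u
    unfold twAdd
    ext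
    · show u.c1 + 0 + Ω u.x1 0 = u.c1; rw [hΩ.2.1]; abel
    · exact add_zero u.x1
  neg_add_cancel u := by
    show twAdd Ω (twNeg Ω u) u = ⟨0,0⟩
    unfold twAdd twNeg
    ext
    · show -u.c1 - Ω u.x1 (-u.x1) + u.c1 + Ω (-u.x1) u.x1 = 0
      rw [hsym (-u.x1) u.x1]; abel
    · exact neg_add_cancel u.x1
  add_comm u v := by
    show twAdd Ω u v = twAdd Ω v u
    unfold twAdd
    ext
    · show u.c1 + v.c1 + Ω u.x1 v.x1 = v.c1 + u.c1 + Ω v.x1 u.x1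
      rw [hsym u.x1 v.x1]; abel
    · exact add_comm u.x1 v.x1

end Tw

/-- Let `Σ` and `C` be abelian groups, and suppose `Σ` is the union of an increasing sequence
of subgroups starting at `{0}` whose successive quotients are isomorphic to `ℤ`, or to
`ℤ/Nℤ` with `C` being `p`-divisible for every prime `p ∣ N`. Then every symmetric normalized
2-cocycle `Ω : Σ × Σ → C` is a coboundary. -/
theorem symm_cocycle_is_coboundary_of_filtration
    {Sg C : Type*} [AddCommGroup Sg] [AddCommGroup C]
    (S : ℕ → AddSubgroup Sg) (hmono : Monotone S) (h0 : S 0 = ⊥)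
    (hunion : ∀ x : Sg, ∃ n, x ∈ S n)
    (hquot : ∀ n : ℕ,
      Nonempty ((↥(S (n + 1)) ⧸ (S n).addSubgroupOf (S (n + 1))) ≃+ ℤ) ∨
      ∃ N : ℕ, 1 ≤ N ∧
        (∀ p : ℕ, p.Prime → p ∣ N → ∀ c : C, ∃ d : C, p • d = c) ∧
        Nonempty ((↥(S (n + 1)) ⧸ (S n).addSubgroupOf (S (n + 1))) ≃+ ZMod N))
    (Ω : Sg → Sg → C) (hΩ : IsAddCocycle Ω) (hsym : ∀ a b, Ω a b = Ω b a) :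
    IsAddCoboundary Ω := by
  classical
  letI : AddCommGroup (TwExt C Sg Ω) := twGroup hΩ hsym
  let π : TwExt C Sg Ω →+ Sg :=
    { toFun := TwExt.x1, map_zero' := rfl, map_add' := fun _ _ => rfl }
  have hπ : ∀ u : TwExt C Sg Ω, π u = u.x1 := fun _ => rfl
  have hsurj : Function.Surjective π := fun x => ⟨⟨0, x⟩, rfl⟩
  have hker_smul : ∀ (n : ℕ) (d : C), n • (⟨d, 0⟩ : TwExt C Sg Ω) = ⟨n • d, 0⟩ := by
    intro n d
    induction n with
    | zero => rw [zero_nsmul, zero_nsmul]; rfl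
    | succ n ihn =>
      rw [succ_nsmul, succ_nsmul, ihn]
      change twAdd Ω _ _ = _
      unfold twAdd
      ext
      · show n • d + d + Ω 0 0 = n • d + d
        rw [hΩ.2.1]; abel
      · show (0 : Sg) + 0 = 0
        simp
  have hkerdiv : ∀ N : ℕ, 1 ≤ N → (∀ p, p.Prime → p ∣ N → ∀ c : C, ∃ d, p • d = c) →
      ∀ c : TwExt C Sg Ω, π c = 0 → ∃ d, π d = 0 ∧ N • d = c := by
    intro N h1 hp c hc
    obtain ⟨d₁, hd₁⟩ := TwAux.nsmul_surj_of_prime N h1 hp c.c1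
    refine ⟨⟨d₁, 0⟩, rfl, ?_⟩
    rw [hker_smul, hd₁]
    have hx : c.x1 = 0 := hc
    ext
    · rfl
    · exact hx.symm
  have hbase : ∃ s₀ : ↥(S 0) →+ TwExt C Sg Ω, ∀ a, π (s₀ a) = (a : Sg) := by
    refine ⟨0, fun a => ?_⟩
    have ha : (a : Sg) = 0 := AddSubgroup.mem_bot.mp (h0.le a.2)
    rw [ha]
    show π 0 = 0
    exact map_zero π
  have hstep : ∀ n (s : ↥(S n) →+ TwExt C Sg Ω), (∀ a, π (s a) = (a : Sg)) →
      ∃ s' : ↥(S (n+1)) →+ TwExt C Sg Ω, (∀ a, π (s' a) = (a : Sg)) ∧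
        ∀ b (hb : b ∈ S n), s' ⟨b, hmono n.le_succ hb⟩ = s ⟨b, hb⟩ := by
    intro n s hs
    rcases hquot n with ⟨⟨ψ⟩⟩ | ⟨N, hN1, hdivp, ⟨ψ⟩⟩
    · exact TwAux.section_extend π hsurj (S n) (S (n+1)) (hmono n.le_succ) 0 ψ
        (Or.inl rfl) s hs
    · exact TwAux.section_extend π hsurj (S n) (S (n+1)) (hmono n.le_succ) N ψ
        (Or.inr (hkerdiv N hN1 hdivp)) s hs
  obtain ⟨σ, hσ0, hσπ, hσadd⟩ := TwAux.section_glue π S hmono hunion hbase hstep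
  refine ⟨fun x => -(σ x).c1, ?_, ?_⟩
  · show -(σ 0).c1 = 0
    rw [hσ0]
    show -(0 : TwExt C Sg Ω).c1 = 0
    rw [twZero_def]
    exact neg_zero
  · intro a b
    have h := hσadd a b
    have hfst : (σ (a + b)).c1 = (σ a).c1 + (σ b).c1 + Ω (σ a).x1 (σ b).x1 := by
      rw [h]
      rfl
    have hxa : (σ a).x1 = a := hσπ a
    have hxb : (σ b).x1 = b := hσπ b
    rw [hxa, hxb] at hfst
    show Ω a b = -(σ a).c1 + -(σ b).c1 - -(σ (a + b)).c1
    rw [hfst]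
    abel
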